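/- Let 𝔈 be a finite set of safe L-expressions with variables among x_0, …, x_k. Then there exist a finite set A of regular box-formulas, a function f^𝔈 : {x_0, …, x_k} → P(A), and for each E ∈ 𝔈 a propositional variable p_E, such that for every E ∈ 𝔈, in every Kripke frame and under every assignment of points to x_0, …, x_k, the expressions E and KF_{f^𝔈}^{p_E} denote the same subset. -/

import Mathlib

set_option autoImplicit true

universe u v w

/-- Modal formulas over modality indices `Λ` and propositional variables `V`. -/
inductive MF (Λ : Type u) (V : Type v) : Type (max u v)
  | var : V → MF Λ V
  | top : MF Λ V
  | bot : MF Λ V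
  | and : MF Λ V → MF Λ V → MF Λ V
  | or  : MF Λ V → MF Λ V → MF Λ V
  | neg : MF Λ V → MF Λ V
  | imp : MF Λ V → MF Λ V → MF Λ V
  | dia : Λ → MF Λ V → MF Λ V
  | box : Λ → MF Λ V → MF Λ V

namespace MF
variable {Λ : Type u} {V : Type v}

/-- The set of propositional variables occurring in a modal formula. -/
def vars : MF Λ V → Set V
  | var p => {p}
  | top => ∅
  | bot => ∅
  | and a b => vars a ∪ vars b
  | or a b => vars a ∪ vars b
  | neg a => vars a
  | imp a b => vars a ∪ vars b
  | dia _ a => vars a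
  | box _ a => vars a

end MF

/-- Positive modal formulas: built without `¬` and `→`. -/
inductive Positive {Λ : Type u} {V : Type v} : MF Λ V → Prop
  | var (p : V) : Positive (.var p)
  | top : Positive .top
  | bot : Positive .bot
  | and {a b} : Positive a → Positive b → Positive (.and a b)
  | or {a b} : Positive a → Positive b → Positive (.or a b)
  | dia (l) {a} : Positive a → Positive (.dia l a)
  | box (l) {a} : Positive a → Positive (.box l a)

/-- A Kripke frame with accessibility relations indexed by `Λ`. -/
structure Frame (Λ : Type u) where
  W : Type w
  R : Λ → W → W → Prop

/-- Kripke satisfaction `F, x, θ ⊨ φ`. -/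
def sat {Λ : Type u} {V : Type v} (F : Frame Λ) (θ : V → Set F.W) : F.W → MF Λ V → Prop
  | x, .var p => x ∈ θ p
  | _, .top => True
  | _, .bot => False
  | x, .and a b => sat F θ x a ∧ sat F θ x b
  | x, .or a b => sat F θ x a ∨ sat F θ x b
  | x, .neg a => ¬ sat F θ x a
  | x, .imp a b => sat F θ x a → sat F θ x b
  | x, .dia l a => ∃ y, F.R l x y ∧ sat F θ y a
  | x, .box l a => ∀ y, F.R l x y → sat F θ y a

/-- `BoxF φ p S`: `φ` is a box-formula with head `p`, in which the set of variables
occurring not as the head is `S`. -/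
inductive BoxF {Λ : Type u} {V : Type v} : MF Λ V → V → Set V → Prop
  | var (p : V) : BoxF (.var p) p ∅
  | imp {POS ψ p S} : Positive POS → BoxF ψ p S → BoxF (.imp POS ψ) p (MF.vars POS ∪ S)
  | box (l) {ψ p S} : BoxF ψ p S → BoxF (.box l ψ) p S

/-- `RegBF r φ p`: relative to the rank assignment `r`, `φ` is a regular box-formula
with head `p` (of rank `r p`): all variables of the positive antecedents have rank `< r p`. -/
inductive RegBF {Λ : Type u} {V : Type v} (r : V → ℕ) : MF Λ V → V → Prop
  | var (p : V) : RegBF r (.var p) p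
  | imp {POS ψ p} : Positive POS → (∀ q ∈ MF.vars POS, r q < r p) →
      RegBF r ψ p → RegBF r (.imp POS ψ) p
  | box (l) {ψ p} : RegBF r ψ p → RegBF r (.box l ψ) p

/-- The edge relation of the dependency graph of a set `A` of box-formulas:
`p → q` iff `p` occurs (not as the head) in some member of `A` with head `q`. -/
def depEdge {Λ : Type u} {V : Type v} (A : Set (MF Λ V)) (p q : V) : Prop :=
  ∃ φ ∈ A, ∃ S, BoxF φ q S ∧ p ∈ S

/-- A set of box-formulas is regular if its dependency graph has no oriented cycle. -/
def RegularSet {Λ : Type u} {V : Type v} (A : Set (MF Λ V)) : Prop :=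
  ∀ p : V, ¬ Relation.TransGen (depEdge A) p p

/-- `R_λ^{-1}(A) = {u : ∃ v, u R_λ v ∧ v ∈ A}`. -/
def Rinv {Λ : Type u} (F : Frame Λ) (l : Λ) (A : Set F.W) : Set F.W :=
  {u | ∃ v, F.R l u v ∧ v ∈ A}

/-- `R_λ^□(A) = {u : ∀ v, u R_λ v → v ∈ A}`. -/
def RboxOp {Λ : Type u} (F : Frame Λ) (l : Λ) (A : Set F.W) : Set F.W :=
  {u | ∀ v, F.R l u v → v ∈ A}

/-- `R_λ(A) = {u : ∃ v, v R_λ u ∧ v ∈ A}`. -/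
def Rfwd {Λ : Type u} (F : Frame Λ) (l : Λ) (A : Set F.W) : Set F.W :=
  {u | ∃ v, F.R l v u ∧ v ∈ A}

/-- The interpretation of the expression `KP^{POS}` in a frame `F`, the set variables
`P^l_i` being interpreted by `P`.  (Junk value `∅` on non-positive constructors.) -/
def KPsem {Λ : Type u} (F : Frame Λ) (P : ℕ × ℕ → Set F.W) : MF Λ (ℕ × ℕ) → Set F.W
  | .var q => P q
  | .top => Set.univ
  | .bot => ∅
  | .and a b => KPsem F P a ∩ KPsem F P b
  | .or a b => KPsem F P a ∪ KPsem F P b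
  | .dia l a => Rinv F l (KPsem F P a)
  | .box l a => RboxOp F l (KPsem F P a)
  | .neg _ => ∅
  | .imp _ _ => ∅

/-- The interpretation of the expression `KV^φ` in a frame `F`: the set variables `P^l_i`
are interpreted by `P` and the extra variable `#` by the second argument.
(Junk value `∅` on constructors that do not occur in regular box-formulas.) -/
def KVsem {Λ : Type u} (F : Frame Λ) (P : ℕ × ℕ → Set F.W) : MF Λ (ℕ × ℕ) → Set F.W → Set F.W
  | .var _, X => X
  | .imp POS ψ, X => KVsem F P ψ (X ∩ KPsem F P POS)
  | .box l ψ, X => KVsem F P ψ (Rfwd F l X)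
  | _, _ => ∅

/-- The semantic minimal valuation: given points `g j` and sets `f j` of regular
box-formulas to be verified at `g j`, `thetaMinSem F g f k i` is the minimal value of the
variable `p^k_i`; it is defined by recursion on the rank `k` as the union, over all `j` and
all `φ ∈ f j` with head `p^k_i`, of `KV^φ(g j)` computed with the minimal values of the
variables of lower rank. -/
noncomputable def thetaMinSem {Λ : Type u} (F : Frame Λ) {ι : Type w} (g : ι → F.W)
    (f : ι → Set (MF Λ (ℕ × ℕ))) : ℕ → ℕ → Set F.W :=
  fun k => Nat.strongRecOn (motive := fun _ => ℕ → Set F.W) k fun k ih i =>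
    ⋃ (j : ι), ⋃ φ ∈ f j, ⋃ (_ : RegBF Prod.fst φ (k, i)),
      KVsem F (fun q => if h : q.1 < k then ih q.1 h q.2 else ∅) φ {g j}

/-- `L`-expressions: terms of the language `L` with individual variables `x_i` (`i : ℕ`),
constants `⊤, ⊥`, unary `R_λ^{-1}`, `R_λ^□`, `R_λ` and binary `∩`, `∪`. -/
inductive LExp (Λ : Type u) : Type u
  | var : ℕ → LExp Λ
  | top : LExp Λ
  | bot : LExp Λ
  | inter : LExp Λ → LExp Λ → LExp Λ
  | union : LExp Λ → LExp Λ → LExp Λ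
  | rinv : Λ → LExp Λ → LExp Λ
  | rbox : Λ → LExp Λ → LExp Λ
  | rfw : Λ → LExp Λ → LExp Λ

namespace LExp
variable {Λ : Type u}

/-- Denotation of an `L`-expression in a frame `F`, the variable `x_i` denoting the
singleton of the point `g i`. -/
def den (F : Frame Λ) (g : ℕ → F.W) : LExp Λ → Set F.W
  | var i => {g i}
  | top => Set.univ
  | bot => ∅
  | inter a b => den F g a ∩ den F g b
  | union a b => den F g a ∪ den F g b
  | rinv l a => Rinv F l (den F g a)
  | rbox l a => RboxOp F l (den F g a)
  | rfw l a => Rfwd F l (den F g a)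

/-- The set of (indices of) individual variables occurring in an `L`-expression. -/
def evars : LExp Λ → Set ℕ
  | var i => {i}
  | top => ∅
  | bot => ∅
  | inter a b => evars a ∪ evars b
  | union a b => evars a ∪ evars b
  | rinv _ a => evars a
  | rbox _ a => evars a
  | rfw _ a => evars a

end LExp

/-- The subexpression relation on `L`-expressions. -/
inductive Subexp {Λ : Type u} : LExp Λ → LExp Λ → Prop
  | refl (e : LExp Λ) : Subexp e e
  | interL {e a b} : Subexp e a → Subexp e (.inter a b)
  | interR {e a b} : Subexp e b → Subexp e (.inter a b)
  | unionL {e a b} : Subexp e a → Subexp e (.union a b)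
  | unionR {e a b} : Subexp e b → Subexp e (.union a b)
  | rinv (l) {e a} : Subexp e a → Subexp e (.rinv l a)
  | rbox (l) {e a} : Subexp e a → Subexp e (.rbox l a)
  | rfw (l) {e a} : Subexp e a → Subexp e (.rfw l a)

/-- `SafeFor e`: `e` is "safe for" the ambient expression, i.e. `e` is a variable, or
`R_λ(e')` with `e'` safe for it, or an intersection one of whose components is safe for it. -/
inductive SafeFor {Λ : Type u} : LExp Λ → Prop
  | var (i : ℕ) : SafeFor (.var i)
  | rfw (l) {a} : SafeFor a → SafeFor (.rfw l a)
  | interL {a b} : SafeFor a → SafeFor (.inter a b)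
  | interR {a b} : SafeFor b → SafeFor (.inter a b)

/-- An `L`-expression is safe if it is safe for itself and the argument of every
subexpression of the form `R_λ(ψ)` is safe for it. -/
def Safe {Λ : Type u} (e : LExp Λ) : Prop :=
  SafeFor e ∧ ∀ l a, Subexp (.rfw l a) e → SafeFor a

mutual
  /-- The class `K`: the least class of `L`-expressions containing the variables and closed
  under `S ↦ R_λ(S)` and `S ↦ S ∩ E` for `E` a positive combination of members of `K`. -/
  inductive InK {Λ : Type u} : LExp Λ → Prop
    | var (i : ℕ) : InK (.var i)
    | rfw (l : Λ) {S : LExp Λ} : InK S → InK (.rfw l S)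
    | inter {S E : LExp Λ} : InK S → PosOfK E → InK (.inter S E)
  /-- Positive combinations of members of `K`: built from members of `K` using only
  `∩`, `∪`, `R_λ^{-1}`, `R_λ^□`, `⊤`, `⊥`. -/
  inductive PosOfK {Λ : Type u} : LExp Λ → Prop
    | ofK {e : LExp Λ} : InK e → PosOfK e
    | top : PosOfK .top
    | bot : PosOfK .bot
    | inter {a b} : PosOfK a → PosOfK b → PosOfK (.inter a b)
    | union {a b} : PosOfK a → PosOfK b → PosOfK (.union a b)
    | rinv (l) {a} : PosOfK a → PosOfK (.rinv l a)
    | rbox (l) {a} : PosOfK a → PosOfK (.rbox l a)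
end

/-- Quasi-safe `L`-expressions: positive combinations of safe expressions, i.e. built from
safe expressions using only `∩`, `∪`, `R_λ^{-1}`, `R_λ^□`, `⊤`, `⊥`. -/
inductive QuasiSafe {Λ : Type u} : LExp Λ → Prop
  | safe {e : LExp Λ} : Safe e → QuasiSafe e
  | top : QuasiSafe .top
  | bot : QuasiSafe .bot
  | inter {a b} : QuasiSafe a → QuasiSafe b → QuasiSafe (.inter a b)
  | union {a b} : QuasiSafe a → QuasiSafe b → QuasiSafe (.union a b)
  | rinv (l) {a} : QuasiSafe a → QuasiSafe (.rinv l a)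
  | rbox (l) {a} : QuasiSafe a → QuasiSafe (.rbox l a)

/-- `ReplOne i ψ φ φ'`: `φ'` is the result of replacing one occurrence of the variable
`x_i` in `φ` by `ψ`. -/
inductive ReplOne {Λ : Type u} (i : ℕ) (ψ : LExp Λ) : LExp Λ → LExp Λ → Prop
  | here : ReplOne i ψ (.var i) ψ
  | interL {a a' b} : ReplOne i ψ a a' → ReplOne i ψ (.inter a b) (.inter a' b)
  | interR {a b b'} : ReplOne i ψ b b' → ReplOne i ψ (.inter a b) (.inter a b')
  | unionL {a a' b} : ReplOne i ψ a a' → ReplOne i ψ (.union a b) (.union a' b)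
  | unionR {a b b'} : ReplOne i ψ b b' → ReplOne i ψ (.union a b) (.union a b')
  | rinv (l) {a a'} : ReplOne i ψ a a' → ReplOne i ψ (.rinv l a) (.rinv l a')
  | rbox (l) {a a'} : ReplOne i ψ a a' → ReplOne i ψ (.rbox l a) (.rbox l a')
  | rfw (l) {a a'} : ReplOne i ψ a a' → ReplOne i ψ (.rfw l a) (.rfw l a')

/-- A finite union of `L`-expressions (empty union is `⊥`). -/
def unionList {Λ : Type u} : List (LExp Λ) → LExp Λ
  | [] => .bot
  | e :: es => .union e (unionList es)

/-- `UnionOfSafe e`: `e` is a finite union of safe expressions. -/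
inductive UnionOfSafe {Λ : Type u} : LExp Λ → Prop
  | bot : UnionOfSafe .bot
  | safe {e : LExp Λ} : Safe e → UnionOfSafe e
  | union {a b} : UnionOfSafe a → UnionOfSafe b → UnionOfSafe (.union a b)

/-- Syntactic `KP^{POS}`: the `L`-expression obtained from the positive formula `POS` by
replacing each set variable `P^l_i` by the `L`-expression `KF (l, i)`.
(Junk value on non-positive constructors.) -/
def KPsub {Λ : Type u} (KF : ℕ × ℕ → LExp Λ) : MF Λ (ℕ × ℕ) → LExp Λ
  | .var q => KF q
  | .top => .top
  | .bot => .bot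
  | .and a b => .inter (KPsub KF a) (KPsub KF b)
  | .or a b => .union (KPsub KF a) (KPsub KF b)
  | .dia l a => .rinv l (KPsub KF a)
  | .box l a => .rbox l (KPsub KF a)
  | .neg _ => .bot
  | .imp _ _ => .bot

/-- Syntactic `KVF^φ(t)`: the `L`-expression obtained from `KV^φ` by substituting the
`L`-expression `t` for `#` and `KF (l, i)` for each set variable `P^l_i`.
(Junk value on constructors that do not occur in regular box-formulas.) -/
def KVFsyn {Λ : Type u} (KF : ℕ × ℕ → LExp Λ) : MF Λ (ℕ × ℕ) → LExp Λ → LExp Λ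
  | .var _, t => t
  | .imp POS ψ, t => KVFsyn KF ψ (.inter t (KPsub KF POS))
  | .box l ψ, t => KVFsyn KF ψ (.rfw l t)
  | _, _ => .bot

open scoped Classical in
/-- The syntactic minimal valuation `KF_f^{p^k_i}` for variables `x_0, …, x_{n-1}` and
`f` assigning to each variable a finite set of regular box-formulas: defined by recursion on
the rank `k` as the union, over all `j < n` and all `φ ∈ f j` with head `p^k_i`, of
`KVF_f^φ(x_j)`, which is `KV^φ` with `x_j` substituted for `#` and `KF_f^{p^l_m}`
substituted for each `P^l_m` with `l < k`. -/
noncomputable def KFsyn {Λ : Type u} (n : ℕ) (f : ℕ → Finset (MF Λ (ℕ × ℕ))) :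
    ℕ → ℕ → LExp Λ :=
  fun k => Nat.strongRecOn (motive := fun _ => ℕ → LExp Λ) k fun k ih i =>
    unionList (((List.range n).flatMap fun j =>
      ((f j).toList.filter fun φ => decide (RegBF Prod.fst φ (k, i))).map fun φ =>
        KVFsyn (fun q => if h : q.1 < k then ih q.1 h q.2 else LExp.bot) φ (LExp.var j)))

/-- The expressions substituted for the set variables `P^l_m`, `l < k`, in `KVF`:
the syntactic minimal valuations of the lower ranks. -/
noncomputable def lowKF {Λ : Type u} (n : ℕ) (f : ℕ → Finset (MF Λ (ℕ × ℕ))) (k : ℕ) :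
    ℕ × ℕ → LExp Λ :=
  fun q => if q.1 < k then KFsyn n f q.1 q.2 else LExp.bot

/-- `KVFat n f φ j k` is the `L`-expression `KVF_f^φ(x_j)` for `φ` a regular box-formula
of rank `k`. -/
noncomputable def KVFat {Λ : Type u} (n : ℕ) (f : ℕ → Finset (MF Λ (ℕ × ℕ)))
    (φ : MF Λ (ℕ × ℕ)) (j k : ℕ) : LExp Λ :=
  KVFsyn (lowKF n f k) φ (.var j)

/-- A labelled tree-like structure: a set of vertices with relations indexed by `Λ`,
a root, and a label function assigning to every vertex a set of labels from `α`. -/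
structure LabTree (Λ : Type u) (α : Type v) where
  V : Type
  R : Λ → V → V → Prop
  root : V
  label : V → Set α

/-- Derivation trees witnessing that a formula is built from base formulas using only
`∧` and `◇_λ`. -/
inductive BuiltT (Λ : Type u) (V : Type v) : Type (max u v)
  | base : MF Λ V → BuiltT Λ V
  | and : BuiltT Λ V → BuiltT Λ V → BuiltT Λ V
  | dia : Λ → BuiltT Λ V → BuiltT Λ V

/-- The modal formula described by a derivation tree. -/
def BuiltT.formula {Λ : Type u} {V : Type v} : BuiltT Λ V → MF Λ V
  | base φ => φ
  | and a b => .and a.formula b.formula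
  | dia l a => .dia l a.formula

/-- The derivation tree uses only base formulas from `A`. -/
def BuiltT.Ok {Λ : Type u} {V : Type v} (A : Set (MF Λ V)) : BuiltT Λ V → Prop
  | base φ => φ ∈ A
  | and a b => a.Ok A ∧ b.Ok A
  | dia _ a => a.Ok A

/-- Helper for gluing two labelled trees at their roots: the relation on the disjoint sum,
with the edges out of the second root re-attached to the first root. -/
def glueR {Λ : Type u} {W₁ W₂ : Type} (R₁ : Λ → W₁ → W₁ → Prop) (R₂ : Λ → W₂ → W₂ → Prop)
    (r₁ : W₁) (r₂ : W₂) (l : Λ) : W₁ ⊕ W₂ → W₁ ⊕ W₂ → Prop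
  | Sum.inl a, Sum.inl b => R₁ l a b
  | Sum.inr a, Sum.inr b => R₂ l a b
  | Sum.inl a, Sum.inr b => a = r₁ ∧ R₂ l r₂ b
  | Sum.inr _, Sum.inl _ => False

open Classical in
/-- Helper for gluing two labelled trees at their roots: the label function, the glued root
receiving the union of the two root labels. -/
noncomputable def glueLab {α : Type w} {W₁ W₂ : Type} (L₁ : W₁ → Set α) (L₂ : W₂ → Set α)
    (r₁ : W₁) (r₂ : W₂) : W₁ ⊕ W₂ → Set α
  | Sum.inl a => if a = r₁ then L₁ r₁ ∪ L₂ r₂ else L₁ a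
  | Sum.inr b => L₂ b

/-- Helper for prefixing a labelled tree with a new root: the relation on `Option W`,
with an `R_{l₀}`-edge from the new root `none` to the old root `r`. -/
def prefR {Λ : Type u} {W : Type} (R : Λ → W → W → Prop) (l₀ : Λ) (r : W) (l : Λ) :
    Option W → Option W → Prop
  | none, some w => l = l₀ ∧ w = r
  | some a, some b => R l a b
  | _, _ => False

/-- Helper for prefixing a labelled tree with a new root: the label function, the new root
getting the empty label. -/
def prefLab {α : Type w} {W : Type} (L : W → Set α) : Option W → Set α
  | none => ∅
  | some a => L a

/-- The reduced syntactical tree of a formula built from base formulas using `∧` and `◇_λ`: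
a single root labelled `{a}` for a base formula `a`; for a conjunction, the two trees
with their roots identified (labels united); for `◇_λ ψ`, a new root with empty label and an
`R_λ`-edge to the root of the tree of `ψ`. -/
noncomputable def TreeOf {Λ : Type u} {V : Type v} : BuiltT Λ V → LabTree Λ (MF Λ V)
  | .base φ =>
      { V := Unit, R := fun _ _ _ => False, root := (), label := fun _ => {φ} }
  | .and b₁ b₂ =>
      let T₁ := TreeOf b₁
      let T₂ := TreeOf b₂
      { V := {v : T₁.V ⊕ T₂.V // v ≠ Sum.inr T₂.root},
        R := fun l u v => glueR T₁.R T₂.R T₁.root T₂.root l u.1 v.1,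
        root := ⟨Sum.inl T₁.root, by exact Sum.inl_ne_inr⟩,
        label := fun v => glueLab T₁.label T₂.label T₁.root T₂.root v.1 }
  | .dia l b =>
      let T := TreeOf b
      { V := Option T.V,
        R := fun l' u v => prefR T.R l T.root l' u v,
        root := none,
        label := fun v => prefLab T.label v }

/-- Restrictedly positive first-order formulas over the frame language: built from atoms
`y ∈ E` (`E` an `L`-expression) using `∧`, `∨` and the restricted quantifiers
`(∀ y ◁_λ x)` and `(∃ y ◁_λ x)`. -/
inductive KrF (Λ : Type u) : Type u
  | atom : ℕ → LExp Λ → KrF Λ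
  | and : KrF Λ → KrF Λ → KrF Λ
  | or : KrF Λ → KrF Λ → KrF Λ
  | all : ℕ → Λ → ℕ → KrF Λ → KrF Λ
  | ex : ℕ → Λ → ℕ → KrF Λ → KrF Λ

namespace KrF
variable {Λ : Type u}

/-- Truth of a restrictedly positive formula in a frame under an assignment `g` of points to
individual variables; the atom `y ∈ E` is read via the `#`-translation, i.e. as membership
of `g y` in the denotation of `E`. -/
def holds (F : Frame Λ) : (ℕ → F.W) → KrF Λ → Prop
  | g, atom y E => g y ∈ E.den F g
  | g, and a b => holds F g a ∧ holds F g b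
  | g, or a b => holds F g a ∨ holds F g b
  | g, all y l x β => ∀ w, F.R l (g x) w → holds F (Function.update g y w) β
  | g, ex y l x β => ∃ w, F.R l (g x) w ∧ holds F (Function.update g y w) β

/-- Free variables. -/
def fv : KrF Λ → Set ℕ
  | atom y E => insert y E.evars
  | and a b => fv a ∪ fv b
  | or a b => fv a ∪ fv b
  | all y _ x β => insert x (fv β \ {y})
  | ex y _ x β => insert x (fv β \ {y})

/-- Bound variables. -/
def bv : KrF Λ → Set ℕ
  | atom _ _ => ∅
  | and a b => bv a ∪ bv b
  | or a b => bv a ∪ bv b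
  | all y _ _ β => insert y (bv β)
  | ex y _ _ β => insert y (bv β)

/-- No two distinct quantifier occurrences bind the same variable. -/
def CleanBound : KrF Λ → Prop
  | atom _ _ => True
  | and a b => CleanBound a ∧ CleanBound b ∧ bv a ∩ bv b = ∅
  | or a b => CleanBound a ∧ CleanBound b ∧ bv a ∩ bv b = ∅
  | all y _ _ β => CleanBound β ∧ y ∉ bv β
  | ex y _ _ β => CleanBound β ∧ y ∉ bv β

/-- Clean formulas: no variable occurs both free and bound, and no two distinct quantifier
occurrences bind the same variable. -/
def Clean (φ : KrF Λ) : Prop := fv φ ∩ bv φ = ∅ ∧ CleanBound φ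

/-- All the `L`-expressions occurring in atoms of the formula satisfy `P`. -/
def AtomsAll (P : LExp Λ → Prop) : KrF Λ → Prop
  | atom _ E => P E
  | and a b => AtomsAll P a ∧ AtomsAll P b
  | or a b => AtomsAll P a ∧ AtomsAll P b
  | all _ _ _ β => AtomsAll P β
  | ex _ _ _ β => AtomsAll P β

/-- Quantifier-free formulas (built from atoms using only `∧` and `∨`). -/
def QFree : KrF Λ → Prop
  | atom _ _ => True
  | and a b => QFree a ∧ QFree b
  | or a b => QFree a ∧ QFree b
  | all _ _ _ _ => False
  | ex _ _ _ _ => False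

/-- Formulas built from atoms using only `∧`, `∨` and restricted universal quantification
(no existential quantifier). -/
def NoEx : KrF Λ → Prop
  | atom _ _ => True
  | and a b => NoEx a ∧ NoEx b
  | or a b => NoEx a ∧ NoEx b
  | all _ _ _ β => NoEx β
  | ex _ _ _ _ => False

/-- `GKok U e φ`: every variable occurring in an `L`-expression of an atom of `φ` is
inherently universal. Here `U` is the set of variables that are inherently universal so far
(initially the free variables) and `e` records whether we are within the scope of an
existential quantifier. -/
def GKok : Set ℕ → Bool → KrF Λ → Prop
  | U, _, atom _ E => E.evars ⊆ U
  | U, e, and a b => GKok U e a ∧ GKok U e b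
  | U, e, or a b => GKok U e a ∧ GKok U e b
  | U, false, all y _ _ β => GKok (insert y U) false β
  | U, true, all _ _ _ β => GKok U true β
  | U, _, ex _ _ _ β => GKok U true β

end KrF

/-- A generalized Kracht formula with free variables: clean, restrictedly positive with safe
atoms, and in every atom `y ∈ E` all variables of `E` are inherently universal. -/
def IsGenKrachtFV {Λ : Type u} (α : KrF Λ) : Prop :=
  α.Clean ∧ α.AtomsAll Safe ∧ α.GKok α.fv false

/-- A generalized Kracht formula: a generalized Kracht formula with free variables whose
only free variable is `x0`. -/
def IsGenKracht {Λ : Type u} (α : KrF Λ) (x0 : ℕ) : Prop :=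
  IsGenKrachtFV α ∧ α.fv = {x0}

/-- Generalized Sahlqvist antecedents: built from regular box-formulas and negative
formulas using only `∧`, `∨`, `◇_λ`. -/
inductive GSAnt {Λ : Type u} : MF Λ (ℕ × ℕ) → Prop
  | reg {φ p} : RegBF Prod.fst φ p → GSAnt φ
  | neg {φ} : Positive φ → GSAnt (.neg φ)
  | and {a b} : GSAnt a → GSAnt b → GSAnt (.and a b)
  | or {a b} : GSAnt a → GSAnt b → GSAnt (.or a b)
  | dia (l) {a} : GSAnt a → GSAnt (.dia l a)

/-- Generalized Sahlqvist formulas: built from generalized Sahlqvist implications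
`GSA → ⊥` by applying boxes and conjunctions, and disjunctions only to formulas without
common propositional variables. -/
inductive GSF {Λ : Type u} : MF Λ (ℕ × ℕ) → Prop
  | impl {a} : GSAnt a → GSF (.imp a .bot)
  | box (l) {a} : GSF a → GSF (.box l a)
  | and {a b} : GSF a → GSF b → GSF (.and a b)
  | or {a b} : GSF a → GSF b → MF.vars a ∩ MF.vars b = ∅ → GSF (.or a b)

open Classical in
/-- The modal translation `E^T` of a quasi-safe expression: safe subexpressions are
replaced by their associated propositional variables `p_E`, and `∩, ∪, R^{-1}_λ, R^□_λ`
become `∧, ∨, ◇_λ, □_λ`. -/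
noncomputable def Etrans {Λ : Type u} (pE : LExp Λ → ℕ × ℕ) : LExp Λ → MF Λ (ℕ × ℕ)
  | .var i => .var (pE (.var i))
  | .top => .top
  | .bot => .bot
  | .inter a b =>
      if Safe (LExp.inter a b) then .var (pE (.inter a b))
      else .and (Etrans pE a) (Etrans pE b)
  | .union a b =>
      if Safe (LExp.union a b) then .var (pE (.union a b))
      else .or (Etrans pE a) (Etrans pE b)
  | .rinv l a =>
      if Safe (LExp.rinv l a) then .var (pE (.rinv l a)) else .dia l (Etrans pE a)
  | .rbox l a =>
      if Safe (LExp.rbox l a) then .var (pE (.rbox l a)) else .box l (Etrans pE a)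
  | .rfw l a => if Safe (LExp.rfw l a) then .var (pE (.rfw l a)) else .bot

/-- A finite disjunction of modal formulas (empty disjunction is `⊥`). -/
def orList {Λ : Type u} {V : Type v} : List (MF Λ V) → MF Λ V
  | [] => .bot
  | a :: as => .or a (orList as)

section Statement10Aux
open scoped Classical

variable {Λ : Type u}

/-- Size of an `L`-expression. -/
def lsize : LExp Λ → ℕ
  | .var _ => 1
  | .top => 1
  | .bot => 1
  | .inter a b => lsize a + lsize b + 1
  | .union a b => lsize a + lsize b + 1
  | .rinv _ a => lsize a + 1
  | .rbox _ a => lsize a + 1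
  | .rfw _ a => lsize a + 1

lemma lsize_pos (e : LExp Λ) : 1 ≤ lsize e := by
  cases e <;> simp only [lsize] <;> omega

lemma Subexp_trans {a b c : LExp Λ} (h1 : Subexp a b) (h2 : Subexp b c) : Subexp a c := by
  induction h2 with
  | refl => exact h1
  | interL _ ih => exact .interL (ih h1)
  | interR _ ih => exact .interR (ih h1)
  | unionL _ ih => exact .unionL (ih h1)
  | unionR _ ih => exact .unionR (ih h1)
  | rinv l _ ih => exact .rinv l (ih h1)
  | rbox l _ ih => exact .rbox l (ih h1)
  | rfw l _ ih => exact .rfw l (ih h1)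

lemma Subexp_lsize_le {s e : LExp Λ} (h : Subexp s e) : lsize s ≤ lsize e := by
  induction h with
  | refl => exact le_rfl
  | interL _ ih => simp only [lsize]; omega
  | interR _ ih => simp only [lsize]; omega
  | unionL _ ih => simp only [lsize]; omega
  | unionR _ ih => simp only [lsize]; omega
  | rinv l _ ih => simp only [lsize]; omega
  | rbox l _ ih => simp only [lsize]; omega
  | rfw l _ ih => simp only [lsize]; omega

lemma Subexp_evars_subset {s e : LExp Λ} (h : Subexp s e) : s.evars ⊆ e.evars := by
  induction h with
  | refl => exact subset_rfl
  | interL _ ih => exact ih.trans (by simp only [LExp.evars]; exact Set.subset_union_left)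
  | interR _ ih => exact ih.trans (by simp only [LExp.evars]; exact Set.subset_union_right)
  | unionL _ ih => exact ih.trans (by simp only [LExp.evars]; exact Set.subset_union_left)
  | unionR _ ih => exact ih.trans (by simp only [LExp.evars]; exact Set.subset_union_right)
  | rinv l _ ih => exact ih
  | rbox l _ ih => exact ih
  | rfw l _ ih => exact ih

/-- The list of all subexpressions. -/
def subList : LExp Λ → List (LExp Λ)
  | .var i => [.var i]
  | .top => [.top]
  | .bot => [.bot]
  | .inter a b => .inter a b :: (subList a ++ subList b)
  | .union a b => .union a b :: (subList a ++ subList b)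
  | .rinv l a => .rinv l a :: subList a
  | .rbox l a => .rbox l a :: subList a
  | .rfw l a => .rfw l a :: subList a

lemma mem_subList_iff {s e : LExp Λ} : s ∈ subList e ↔ Subexp s e := by
  induction e with
  | var i =>
    simp only [subList, List.mem_singleton]
    constructor
    · rintro rfl; exact .refl _
    · intro h; cases h; rfl
  | top =>
    simp only [subList, List.mem_singleton]
    constructor
    · rintro rfl; exact .refl _
    · intro h; cases h; rfl
  | bot =>
    simp only [subList, List.mem_singleton]
    constructor
    · rintro rfl; exact .refl _
    · intro h; cases h; rfl
  | inter a b iha ihb =>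
    simp only [subList, List.mem_cons, List.mem_append, iha, ihb]
    constructor
    · rintro (rfl | h | h)
      · exact .refl _
      · exact .interL h
      · exact .interR h
    · intro h
      cases h with
      | refl => exact Or.inl rfl
      | interL h => exact Or.inr (Or.inl h)
      | interR h => exact Or.inr (Or.inr h)
  | union a b iha ihb =>
    simp only [subList, List.mem_cons, List.mem_append, iha, ihb]
    constructor
    · rintro (rfl | h | h)
      · exact .refl _
      · exact .unionL h
      · exact .unionR h
    · intro h
      cases h with
      | refl => exact Or.inl rfl
      | unionL h => exact Or.inr (Or.inl h)
      | unionR h => exact Or.inr (Or.inr h)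
  | rinv l a iha =>
    simp only [subList, List.mem_cons, iha]
    constructor
    · rintro (rfl | h)
      · exact .refl _
      · exact .rinv l h
    · intro h
      cases h with
      | refl => exact Or.inl rfl
      | rinv _ h => exact Or.inr h
  | rbox l a iha =>
    simp only [subList, List.mem_cons, iha]
    constructor
    · rintro (rfl | h)
      · exact .refl _
      · exact .rbox l h
    · intro h
      cases h with
      | refl => exact Or.inl rfl
      | rbox _ h => exact Or.inr h
  | rfw l a iha =>
    simp only [subList, List.mem_cons, iha]
    constructor
    · rintro (rfl | h)
      · exact .refl _
      · exact .rfw l h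
    · intro h
      cases h with
      | refl => exact Or.inl rfl
      | rfw _ h => exact Or.inr h

/-- The base variable of a safe expression. -/
noncomputable def baseVar : LExp Λ → ℕ
  | .var i => i
  | .rfw _ a => baseVar a
  | .inter a b => if SafeFor a then baseVar a else baseVar b
  | _ => 0

lemma baseVar_mem_evars : ∀ e : LExp Λ, SafeFor e → baseVar e ∈ e.evars := by
  intro e
  induction e with
  | var i => intro _; simp [baseVar, LExp.evars]
  | top => intro h; cases h
  | bot => intro h; cases h
  | inter a b iha ihb =>
    intro h
    by_cases hA : SafeFor a
    · simp only [baseVar, if_pos hA, LExp.evars]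
      exact Set.mem_union_left _ (iha hA)
    · have hB : SafeFor b := by
        cases h with
        | interL h' => exact absurd h' hA
        | interR h' => exact h'
      simp only [baseVar, if_neg hA, LExp.evars]
      exact Set.mem_union_right _ (ihb hB)
  | union a b _ _ => intro h; cases h
  | rinv l a _ => intro h; cases h
  | rbox l a _ => intro h; cases h
  | rfw l a ih =>
    intro h
    have ha : SafeFor a := by cases h; assumption
    simp only [baseVar, LExp.evars]
    exact ih ha

/-- Translation of a quasi-safe part into a positive modal formula. -/
noncomputable def posT (pv : LExp Λ → ℕ × ℕ) : LExp Λ → MF Λ (ℕ × ℕ)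
  | .var i => .var (pv (.var i))
  | .top => .top
  | .bot => .bot
  | .inter a b => .and (posT pv a) (posT pv b)
  | .union a b => .or (posT pv a) (posT pv b)
  | .rinv l a => .dia l (posT pv a)
  | .rbox l a => .box l (posT pv a)
  | .rfw l a => .var (pv (.rfw l a))

lemma posT_positive (pv : LExp Λ → ℕ × ℕ) : ∀ e : LExp Λ, Positive (posT pv e) := by
  intro e
  induction e with
  | var i => exact .var _
  | top => exact .top
  | bot => exact .bot
  | inter a b iha ihb => exact .and iha ihb
  | union a b iha ihb => exact .or iha ihb
  | rinv l a iha => exact .dia l iha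
  | rbox l a iha => exact .box l iha
  | rfw l a _ => exact .var _

lemma vars_posT (pv : LExp Λ → ℕ × ℕ) :
    ∀ e : LExp Λ, (∀ l a, Subexp (.rfw l a) e → SafeFor a) →
    ∀ q ∈ MF.vars (posT pv e), ∃ S, Subexp S e ∧ SafeFor S ∧ q = pv S := by
  intro e
  induction e with
  | var i =>
    intro _ q hq
    simp only [posT, MF.vars, Set.mem_singleton_iff] at hq
    exact ⟨.var i, .refl _, .var i, hq⟩
  | top => intro _ q hq; simp [posT, MF.vars] at hq
  | bot => intro _ q hq; simp [posT, MF.vars] at hq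
  | inter a b iha ihb =>
    intro hr q hq
    simp only [posT, MF.vars, Set.mem_union] at hq
    rcases hq with hq | hq
    · obtain ⟨S, h1, h2, h3⟩ := iha (fun l x hx => hr l x (.interL hx)) q hq
      exact ⟨S, .interL h1, h2, h3⟩
    · obtain ⟨S, h1, h2, h3⟩ := ihb (fun l x hx => hr l x (.interR hx)) q hq
      exact ⟨S, .interR h1, h2, h3⟩
  | union a b iha ihb =>
    intro hr q hq
    simp only [posT, MF.vars, Set.mem_union] at hq
    rcases hq with hq | hq
    · obtain ⟨S, h1, h2, h3⟩ := iha (fun l x hx => hr l x (.unionL hx)) q hq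
      exact ⟨S, .unionL h1, h2, h3⟩
    · obtain ⟨S, h1, h2, h3⟩ := ihb (fun l x hx => hr l x (.unionR hx)) q hq
      exact ⟨S, .unionR h1, h2, h3⟩
  | rinv l a iha =>
    intro hr q hq
    simp only [posT, MF.vars] at hq
    obtain ⟨S, h1, h2, h3⟩ := iha (fun l' x hx => hr l' x (.rinv l hx)) q hq
    exact ⟨S, .rinv l h1, h2, h3⟩
  | rbox l a iha =>
    intro hr q hq
    simp only [posT, MF.vars] at hq
    obtain ⟨S, h1, h2, h3⟩ := iha (fun l' x hx => hr l' x (.rbox l hx)) q hq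
    exact ⟨S, .rbox l h1, h2, h3⟩
  | rfw l a _ =>
    intro hr q hq
    simp only [posT, MF.vars, Set.mem_singleton_iff] at hq
    exact ⟨.rfw l a, .refl _, .rfw l (hr l a (.refl _)), hq⟩

lemma den_KPsub_posT {F : Frame Λ} {g : ℕ → F.W} (KF : ℕ × ℕ → LExp Λ)
    (pv : LExp Λ → ℕ × ℕ) :
    ∀ e : LExp Λ, (∀ l a, Subexp (.rfw l a) e → SafeFor a) →
    (∀ T, Subexp T e → SafeFor T → (KF (pv T)).den F g = T.den F g) →
    (KPsub KF (posT pv e)).den F g = e.den F g := by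
  intro e
  induction e with
  | var i => intro _ hk; simpa [posT, KPsub] using hk _ (.refl _) (.var i)
  | top => intro _ _; simp [posT, KPsub, LExp.den]
  | bot => intro _ _; simp [posT, KPsub, LExp.den]
  | inter a b iha ihb =>
    intro hr hk
    simp only [posT, KPsub, LExp.den]
    rw [iha (fun l x hx => hr l x (.interL hx)) (fun T hT hs => hk T (.interL hT) hs),
      ihb (fun l x hx => hr l x (.interR hx)) (fun T hT hs => hk T (.interR hT) hs)]
  | union a b iha ihb =>
    intro hr hk
    simp only [posT, KPsub, LExp.den]
    rw [iha (fun l x hx => hr l x (.unionL hx)) (fun T hT hs => hk T (.unionL hT) hs),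
      ihb (fun l x hx => hr l x (.unionR hx)) (fun T hT hs => hk T (.unionR hT) hs)]
  | rinv l a iha =>
    intro hr hk
    simp only [posT, KPsub, LExp.den]
    rw [iha (fun l' x hx => hr l' x (.rinv l hx)) (fun T hT hs => hk T (.rinv l hT) hs)]
  | rbox l a iha =>
    intro hr hk
    simp only [posT, KPsub, LExp.den]
    rw [iha (fun l' x hx => hr l' x (.rbox l hx)) (fun T hT hs => hk T (.rbox l hT) hs)]
  | rfw l a _ =>
    intro hr hk
    simpa [posT, KPsub] using hk _ (.refl _) (.rfw l (hr l a (.refl _)))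

/-- The regular box-formula associated to a safe expression (with accumulator). -/
noncomputable def phiT (pv : LExp Λ → ℕ × ℕ) : LExp Λ → MF Λ (ℕ × ℕ) → MF Λ (ℕ × ℕ)
  | .var _, acc => acc
  | .rfw l a, acc => phiT pv a (.box l acc)
  | .inter a b, acc =>
      if SafeFor a then phiT pv a (.imp (posT pv b) acc)
      else phiT pv b (.imp (posT pv a) acc)
  | _, acc => acc

/-- Replacement of the base variable of a safe expression. -/
noncomputable def replBase : LExp Λ → LExp Λ → LExp Λ
  | .var _, t => t
  | .rfw l a, t => .rfw l (replBase a t)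
  | .inter a b, t =>
      if SafeFor a then .inter (replBase a t) b else .inter a (replBase b t)
  | e, _ => e

lemma replBase_base : ∀ e : LExp Λ, SafeFor e → replBase e (.var (baseVar e)) = e := by
  intro e
  induction e with
  | var i => intro _; simp [replBase, baseVar]
  | top => intro h; cases h
  | bot => intro h; cases h
  | inter a b iha ihb =>
    intro h
    by_cases hA : SafeFor a
    · simp only [replBase, baseVar, if_pos hA]
      rw [iha hA]
    · have hB : SafeFor b := by
        cases h with
        | interL h' => exact absurd h' hA
        | interR h' => exact h'
      simp only [replBase, baseVar, if_neg hA]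
      rw [ihb hB]
  | union a b _ _ => intro h; cases h
  | rinv l a _ => intro h; cases h
  | rbox l a _ => intro h; cases h
  | rfw l a ih =>
    intro h
    have ha : SafeFor a := by cases h; assumption
    simp only [replBase, baseVar]
    rw [ih ha]

lemma den_KVFsyn_congr {F : Frame Λ} {g : ℕ → F.W} (KF : ℕ × ℕ → LExp Λ) :
    ∀ (ψ : MF Λ (ℕ × ℕ)) {t t' : LExp Λ}, t.den F g = t'.den F g →
    (KVFsyn KF ψ t).den F g = (KVFsyn KF ψ t').den F g := by
  intro ψ
  induction ψ with
  | var p => intro t t' h; simpa [KVFsyn] using h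
  | top => intro t t' h; simp [KVFsyn]
  | bot => intro t t' h; simp [KVFsyn]
  | and a b _ _ => intro t t' h; simp [KVFsyn]
  | or a b _ _ => intro t t' h; simp [KVFsyn]
  | neg a _ => intro t t' h; simp [KVFsyn]
  | imp a b _ ihb =>
    intro t t' h
    simp only [KVFsyn]
    exact ihb (by simp only [LExp.den, h])
  | dia l a _ => intro t t' h; simp [KVFsyn]
  | box l a ih =>
    intro t t' h
    simp only [KVFsyn]
    exact ih (by simp only [LExp.den, Rfwd, h])

lemma den_phiT {F : Frame Λ} {g : ℕ → F.W} (KF : ℕ × ℕ → LExp Λ)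
    (pv : LExp Λ → ℕ × ℕ) (N : ℕ) :
    ∀ e : LExp Λ, SafeFor e → lsize e ≤ N →
    (∀ l a, Subexp (.rfw l a) e → SafeFor a) →
    (∀ T, Subexp T e → SafeFor T → lsize T < N → (KF (pv T)).den F g = T.den F g) →
    ∀ (acc : MF Λ (ℕ × ℕ)) (t : LExp Λ),
    (KVFsyn KF (phiT pv e acc) t).den F g = (KVFsyn KF acc (replBase e t)).den F g := by
  intro e
  induction e with
  | var i => intro _ _ _ _ acc t; simp [phiT, replBase]
  | top => intro h; cases h
  | bot => intro h; cases h
  | inter a b iha ihb =>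
    intro h hsz hr hk acc t
    simp only [lsize] at hsz
    have la := lsize_pos a
    have lb := lsize_pos b
    by_cases hA : SafeFor a
    · simp only [phiT, replBase, if_pos hA]
      rw [iha hA (by omega) (fun l x hx => hr l x (.interL hx))
        (fun T hT hs hlt => hk T (.interL hT) hs hlt) (.imp (posT pv b) acc) t]
      simp only [KVFsyn]
      apply den_KVFsyn_congr
      have hb : (KPsub KF (posT pv b)).den F g = b.den F g :=
        den_KPsub_posT KF pv b (fun l x hx => hr l x (.interR hx))
          (fun T hT hs => hk T (.interR hT) hs
            (by have := Subexp_lsize_le hT; omega))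
      simp only [LExp.den, hb]
    · have hB : SafeFor b := by
        cases h with
        | interL h' => exact absurd h' hA
        | interR h' => exact h'
      simp only [phiT, replBase, if_neg hA]
      rw [ihb hB (by omega) (fun l x hx => hr l x (.interR hx))
        (fun T hT hs hlt => hk T (.interR hT) hs hlt) (.imp (posT pv a) acc) t]
      simp only [KVFsyn]
      apply den_KVFsyn_congr
      have ha' : (KPsub KF (posT pv a)).den F g = a.den F g :=
        den_KPsub_posT KF pv a (fun l x hx => hr l x (.interL hx))
          (fun T hT hs => hk T (.interL hT) hs
            (by have := Subexp_lsize_le hT; omega))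
      simp only [LExp.den, ha']
      exact Set.inter_comm _ _
  | union a b _ _ => intro h; cases h
  | rinv l a _ => intro h; cases h
  | rbox l a _ => intro h; cases h
  | rfw l a ih =>
    intro h hsz hr hk acc t
    have ha : SafeFor a := by cases h; assumption
    simp only [lsize] at hsz
    simp only [phiT, replBase]
    rw [ih ha (by omega) (fun l' x hx => hr l' x (.rfw l hx))
      (fun T hT hs hlt => hk T (.rfw l hT) hs hlt) (.box l acc) t]
    simp only [KVFsyn]

lemma regBF_phiT (pv : LExp Λ → ℕ × ℕ) (N : ℕ) :
    ∀ e : LExp Λ, SafeFor e → lsize e ≤ N →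
    (∀ l a, Subexp (.rfw l a) e → SafeFor a) →
    ∀ p : ℕ × ℕ, (∀ T, Subexp T e → SafeFor T → lsize T < N → (pv T).1 < p.1) →
    ∀ acc, RegBF Prod.fst acc p → RegBF Prod.fst (phiT pv e acc) p := by
  intro e
  induction e with
  | var i => intro _ _ _ p _ acc hacc; exact hacc
  | top => intro h; cases h
  | bot => intro h; cases h
  | inter a b iha ihb =>
    intro h hsz hr p hp acc hacc
    simp only [lsize] at hsz
    have la := lsize_pos a
    have lb := lsize_pos b
    by_cases hA : SafeFor a
    · simp only [phiT, if_pos hA]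
      refine iha hA (by omega) (fun l x hx => hr l x (.interL hx)) p
        (fun T hT hs hlt => hp T (.interL hT) hs hlt) _ ?_
      refine RegBF.imp (posT_positive pv b) ?_ hacc
      intro q hq
      obtain ⟨S, h1, h2, h3⟩ := vars_posT pv b (fun l x hx => hr l x (.interR hx)) q hq
      have := hp S (.interR h1) h2 (by have := Subexp_lsize_le h1; omega)
      simpa [h3] using this
    · have hB : SafeFor b := by
        cases h with
        | interL h' => exact absurd h' hA
        | interR h' => exact h'
      simp only [phiT, if_neg hA]
      refine ihb hB (by omega) (fun l x hx => hr l x (.interR hx)) p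
        (fun T hT hs hlt => hp T (.interR hT) hs hlt) _ ?_
      refine RegBF.imp (posT_positive pv a) ?_ hacc
      intro q hq
      obtain ⟨S, h1, h2, h3⟩ := vars_posT pv a (fun l x hx => hr l x (.interL hx)) q hq
      have := hp S (.interL h1) h2 (by have := Subexp_lsize_le h1; omega)
      simpa [h3] using this
  | union a b _ _ => intro h; cases h
  | rinv l a _ => intro h; cases h
  | rbox l a _ => intro h; cases h
  | rfw l a ih =>
    intro h hsz hr p hp acc hacc
    have ha : SafeFor a := by cases h; assumption
    simp only [lsize] at hsz
    simp only [phiT]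
    exact ih ha (by omega) (fun l' x hx => hr l' x (.rfw l hx)) p
      (fun T hT hs hlt => hp T (.rfw l hT) hs hlt) _ (RegBF.box l hacc)

lemma RegBF_head_unique {V : Type v} {r : V → ℕ} {φ : MF Λ V} {p q : V}
    (h1 : RegBF r φ p) (h2 : RegBF r φ q) : p = q := by
  induction h1 generalizing q with
  | var p => cases h2; rfl
  | imp _ _ _ ih =>
    cases h2 with
    | imp _ _ h => exact ih h
  | box l _ ih =>
    cases h2 with
    | box _ h => exact ih h

lemma mem_den_unionList {F : Frame Λ} {g : ℕ → F.W} :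
    ∀ (es : List (LExp Λ)) (x : F.W),
    x ∈ (unionList es).den F g ↔ ∃ e ∈ es, x ∈ e.den F g := by
  intro es x
  induction es with
  | nil => simp [unionList, LExp.den]
  | cons e es ih => simp [unionList, LExp.den, ih]

lemma KFsyn_eq (n : ℕ) (f : ℕ → Finset (MF Λ (ℕ × ℕ))) (r i : ℕ) :
    KFsyn n f r i = unionList (((List.range n).flatMap fun j =>
      ((f j).toList.filter fun φ => decide (RegBF Prod.fst φ (r, i))).map fun φ =>
        KVFsyn (fun q => if h : q.1 < r then KFsyn n f q.1 q.2 else LExp.bot) φ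
          (LExp.var j))) := by
  conv_lhs => rw [KFsyn]
  rw [Nat.strongRecOn_eq]
  rfl

/-- The propositional variable associated to an expression, relative to a master list. -/
noncomputable def pvL (L : List (LExp Λ)) : LExp Λ → ℕ × ℕ :=
  fun e => (lsize e, L.idxOf e)

/-- The assignment of sets of regular box-formulas to the individual variables. -/
noncomputable def fL (k : ℕ) (L : List (LExp Λ)) : ℕ → Finset (MF Λ (ℕ × ℕ)) :=
  fun j =>
    ((L.filter fun S => decide (SafeFor S ∧ baseVar S = j ∧ j ≤ k)).map
      fun S => phiT (pvL L) S (.var (pvL L S))).toFinset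

lemma mem_fL {k : ℕ} {L : List (LExp Λ)} {j : ℕ} {ψ : MF Λ (ℕ × ℕ)} :
    ψ ∈ fL k L j ↔ ∃ S, S ∈ L ∧ SafeFor S ∧ baseVar S = j ∧ j ≤ k ∧
      ψ = phiT (pvL L) S (.var (pvL L S)) := by
  simp only [fL, List.mem_toFinset, List.mem_map, List.mem_filter, decide_eq_true_eq]
  constructor
  · rintro ⟨S, ⟨hS, h1, h2, h3⟩, rfl⟩
    exact ⟨S, hS, h1, h2, h3, rfl⟩
  · rintro ⟨S, hS, h1, h2, h3, rfl⟩
    exact ⟨S, ⟨hS, h1, h2, h3⟩, rfl⟩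

lemma reg_phiT_gen (L : List (LExp Λ)) (T : LExp Λ)
    (hrT : ∀ l a, Subexp (.rfw l a) T → SafeFor a) (h : SafeFor T) :
    RegBF Prod.fst (phiT (pvL L) T (.var (pvL L T))) (pvL L T) := by
  refine regBF_phiT (pvL L) (lsize T) T h le_rfl hrT (pvL L T) ?_ _ (.var _)
  intro T' _ _ hlt
  exact hlt

lemma pvL_inj {L : List (LExp Λ)} {S S' : LExp Λ} (hS : S ∈ L) (hS' : S' ∈ L)
    (h : pvL L S = pvL L S') : S = S' := by
  have h2 : L.idxOf S = L.idxOf S' := congrArg Prod.snd h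
  exact (List.idxOf_inj hS).1 h2

lemma main_den (k : ℕ) (L : List (LExp Λ))
    (HrL : ∀ S ∈ L, ∀ l a, Subexp (.rfw l a) S → SafeFor a)
    (bvle : ∀ S ∈ L, SafeFor S → baseVar S ≤ k)
    (closed : ∀ S ∈ L, ∀ T, Subexp T S → T ∈ L) :
    ∀ N S, S ∈ L → SafeFor S → lsize S ≤ N → ∀ (F : Frame Λ) (g : ℕ → F.W),
    S.den F g = (KFsyn (k + 1) (fL k L) (lsize S) (L.idxOf S)).den F g := by
  intro N
  induction N with
  | zero =>
    intro S _ _ hsz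
    have := lsize_pos S
    omega
  | succ N ih =>
    intro S hS hSafe hsz F g
    rw [KFsyn_eq]
    set KF' : ℕ × ℕ → LExp Λ :=
      fun q => if h : q.1 < lsize S then KFsyn (k + 1) (fL k L) q.1 q.2 else LExp.bot
      with hKF'
    have hj0 : baseVar S ≤ k := bvle S hS hSafe
    have hk : ∀ T, Subexp T S → SafeFor T → lsize T < lsize S →
        (KF' (pvL L T)).den F g = T.den F g := by
      intro T hT hTSafe hlt
      have hTL : T ∈ L := closed S hS T hT
      have heq : KF' (pvL L T) = KFsyn (k + 1) (fL k L) (lsize T) (L.idxOf T) := by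
        rw [hKF']
        exact dif_pos hlt
      rw [heq]
      exact (ih T hTL hTSafe (by omega) F g).symm
    have he0den : (KVFsyn KF' (phiT (pvL L) S (.var (pvL L S)))
        (.var (baseVar S))).den F g = S.den F g := by
      have h1 := den_phiT KF' (pvL L) (lsize S) S hSafe le_rfl (HrL S hS) hk
        (.var (pvL L S)) (.var (baseVar S))
      rw [replBase_base S hSafe] at h1
      exact h1
    ext x
    rw [mem_den_unionList]
    constructor
    · intro hx
      refine ⟨KVFsyn KF' (phiT (pvL L) S (.var (pvL L S))) (.var (baseVar S)), ?_, ?_⟩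
      · rw [List.mem_flatMap]
        refine ⟨baseVar S, List.mem_range.2 (by omega), ?_⟩
        rw [List.mem_map]
        refine ⟨phiT (pvL L) S (.var (pvL L S)), ?_, rfl⟩
        rw [List.mem_filter]
        refine ⟨Finset.mem_toList.2 (mem_fL.2 ⟨S, hS, hSafe, rfl, hj0, rfl⟩), ?_⟩
        rw [decide_eq_true_eq]
        exact reg_phiT_gen L S (HrL S hS) hSafe
      · rw [he0den]
        exact hx
    · rintro ⟨e, he, hx⟩
      rw [List.mem_flatMap] at he
      obtain ⟨j, hjr, he⟩ := he
      rw [List.mem_map] at he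
      obtain ⟨φ, hφ, rfl⟩ := he
      rw [List.mem_filter] at hφ
      obtain ⟨hφf, hregb⟩ := hφ
      rw [decide_eq_true_eq] at hregb
      obtain ⟨T, hTL, hTSafe, hTbv, hTk, rfl⟩ := mem_fL.1 (Finset.mem_toList.1 hφf)
      have hhead : pvL L T = (lsize S, L.idxOf S) :=
        RegBF_head_unique (reg_phiT_gen L T (HrL T hTL) hTSafe) hregb
      have hTS : T = S := pvL_inj hTL hS hhead
      subst hTS
      subst hTbv
      rw [he0den] at hx
      exact hx

end Statement10Aux

/-- for every finite set `𝔈` of safe `L`-expressions with variables among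
`x_0, …, x_k` there are a function `f^𝔈` assigning to each of these variables a finite set
of regular box-formulas and, for each `E ∈ 𝔈`, a propositional variable `p_E`, such that
`E` and `KF_{f^𝔈}^{p_E}` denote the same subset in every Kripke frame under every
assignment of points. -/
theorem statement10 {Λ : Type u} (k : ℕ) (𝔈 : Finset (LExp Λ))
    (hsafe : ∀ E ∈ 𝔈, Safe E) (hvars : ∀ E ∈ 𝔈, E.evars ⊆ {i : ℕ | i ≤ k}) :
    ∃ f : ℕ → Finset (MF Λ (ℕ × ℕ)),
      (∀ j, ∀ ψ ∈ f j, ∃ p : ℕ × ℕ, RegBF Prod.fst ψ p) ∧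
      (∀ j, k + 1 ≤ j → f j = ∅) ∧
      ∃ pE : LExp Λ → ℕ × ℕ, ∀ E ∈ 𝔈, ∀ (F : Frame Λ) (g : ℕ → F.W),
        E.den F g = (KFsyn (k + 1) f (pE E).1 (pE E).2).den F g := by
  classical
  have memL : ∀ S : LExp Λ, S ∈ 𝔈.toList.flatMap subList ↔ ∃ E ∈ 𝔈, Subexp S E := by
    intro S
    simp [List.mem_flatMap, mem_subList_iff]
  set L := 𝔈.toList.flatMap subList with hL
  have HrL : ∀ S ∈ L, ∀ l a, Subexp (.rfw l a) S → SafeFor a := by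
    intro S hS l a hsub
    obtain ⟨E, hE, hSE⟩ := (memL S).1 hS
    exact (hsafe E hE).2 l a (Subexp_trans hsub hSE)
  have bvle : ∀ S ∈ L, SafeFor S → baseVar S ≤ k := by
    intro S hS h
    obtain ⟨E, hE, hSE⟩ := (memL S).1 hS
    exact hvars E hE (Subexp_evars_subset hSE (baseVar_mem_evars S h))
  have closed : ∀ S ∈ L, ∀ T, Subexp T S → T ∈ L := by
    intro S hS T hT
    obtain ⟨E, hE, hSE⟩ := (memL S).1 hS
    exact (memL T).2 ⟨E, hE, Subexp_trans hT hSE⟩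
  refine ⟨fL k L, ?_, ?_, pvL L, ?_⟩
  · intro j ψ hψ
    obtain ⟨S, hS, hSafe', _, _, rfl⟩ := mem_fL.1 hψ
    exact ⟨pvL L S, reg_phiT_gen L S (HrL S hS) hSafe'⟩
  · intro j hj
    ext ψ
    simp only [Finset.notMem_empty, iff_false]
    intro hψ
    obtain ⟨S, _, _, _, hjk, _⟩ := mem_fL.1 hψ
    omega
  · intro E hE F g
    have hEL : E ∈ L := (memL E).2 ⟨E, hE, .refl E⟩
    exact main_den k L HrL bvle closed (lsize E) E hEL (hsafe E hE).1 le_rfl F g
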